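/- Let G be an undirected graph, S ⊆ E(G), and Z ⊆ V(G) a set disjoint from V(S) such that G - Z contains no S-cycle. Then |S| is at most the number of connected components of G - Z - S that contain an endpoint of an edge of S (i.e., the number of non-solitary bubbles). -/

import Mathlib

open SimpleGraph



lemma aux_dist_split {W : Type} [DecidableEq W] {B : SimpleGraph W} {r b : W} (q : B.Walk r b) {a : W}
    (ha : a ∈ q.support) : B.dist r a + B.dist a b ≤ q.length := by
  have h1 : B.dist r a ≤ (q.takeUntil a ha).length := SimpleGraph.dist_le _
  have h2 : B.dist a b ≤ (q.dropUntil a ha).length := SimpleGraph.dist_le _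
  have h3 : (q.takeUntil a ha).length + (q.dropUntil a ha).length = q.length := by
    rw [← SimpleGraph.Walk.length_append, q.take_spec ha]
  omega

lemma aux_dist_ne {W : Type} [DecidableEq W] {B : SimpleGraph W} (hB : B.IsAcyclic) {r a b : W}
    (hra : B.Reachable r a) (hab : B.Adj a b) : B.dist r a ≠ B.dist r b := by
  intro h
  have hrb : B.Reachable r b := hra.trans hab.reachable
  obtain ⟨p, hp, hpl⟩ := hra.exists_path_of_dist
  obtain ⟨q, hq, hql⟩ := hrb.exists_path_of_dist
  have hanq : a ∉ q.support := by
    intro haq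
    have h5 := aux_dist_split q haq
    rw [hql, ← h] at h5
    have h6 : B.dist a b = 0 := by omega
    have h7 : a = b := by
      have := hab.reachable
      rwa [SimpleGraph.Reachable.dist_eq_zero_iff this] at h6
    exact hab.ne h7
  have hanq' : a ∉ q.reverse.support := by
    rwa [SimpleGraph.Walk.support_reverse, List.mem_reverse]
  have huniq := SimpleGraph.isAcyclic_iff_path_unique.mp hB
    ⟨p.reverse, hp.reverse⟩ ⟨Walk.cons hab q.reverse, hq.reverse.cons hanq'⟩
  have hlen := congrArg (fun (P : B.Path a r) => P.1.length) huniq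
  simp only [SimpleGraph.Walk.length_reverse, SimpleGraph.Walk.length_cons] at hlen
  omega

lemma aux_two_down {W : Type} [DecidableEq W] {B : SimpleGraph W} (hB : B.IsAcyclic) {r v a b : W}
    (hra : B.Reachable r a) (hrb : B.Reachable r b)
    (hav : B.Adj a v) (hbv : B.Adj b v) (hab : a ≠ b)
    (h1 : B.dist r a < B.dist r v) (h2 : B.dist r b < B.dist r v) : False := by
  obtain ⟨p, hp, hpl⟩ := hra.exists_path_of_dist
  obtain ⟨q, hq, hql⟩ := hrb.exists_path_of_dist
  have hvp : v ∉ p.support := by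
    intro hv
    have := aux_dist_split p hv
    omega
  have hvq : v ∉ q.support := by
    intro hv
    have := aux_dist_split q hv
    omega
  have hvp' : v ∉ p.reverse.support := by rwa [SimpleGraph.Walk.support_reverse, List.mem_reverse]
  have hvq' : v ∉ q.reverse.support := by rwa [SimpleGraph.Walk.support_reverse, List.mem_reverse]
  have huniq := SimpleGraph.isAcyclic_iff_path_unique.mp hB
    ⟨Walk.cons hav.symm p.reverse, hp.reverse.cons hvp'⟩
    ⟨Walk.cons hbv.symm q.reverse, hq.reverse.cons hvq'⟩
  have hsup := congrArg (fun (P : B.Path v r) => P.1.support) huniq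
  simp only [SimpleGraph.Walk.support_cons] at hsup
  have hpq : p.reverse.support = q.reverse.support := by
    exact (List.cons.injEq _ _ _ _ ▸ hsup).2
  have hhead : a = b := by
    have e1 := p.reverse.support_eq_cons
    have e2 := q.reverse.support_eq_cons
    rw [e1, e2] at hpq
    exact (List.cons.injEq _ _ _ _ ▸ hpq).1
  exact hab hhead


lemma acyclic_card_bound {W : Type} [Finite W] (B : SimpleGraph W) (hB : B.IsAcyclic) :
    B.edgeSet.ncard ≤ {c : W | ∃ d, B.Adj c d}.ncard := by
  classical
  cases isEmpty_or_nonempty W with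
  | inl h =>
    have : B.edgeSet = ∅ := by
      ext e
      induction e with
      | h x y => exact (h.false x).elim
    simp [this]
  | inr hne =>
  -- the spec: P e v means v is the far endpoint of e from the root of its component
  set root : W → W := fun v => Quot.out (B.connectedComponentMk v) with hroot
  have hroot_reach : ∀ v, B.Reachable (root v) v := by
    intro v
    apply SimpleGraph.ConnectedComponent.exact
    exact Quot.out_eq _
  set P : Sym2 W → W → Prop :=
    fun e v => ∃ o, e = s(o, v) ∧ B.dist (root v) o < B.dist (root v) v with hP
  have hex : ∀ e ∈ B.edgeSet, ∃ v, P e v := by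
    intro e he
    set a := (Quot.out e).1 with ha
    set b := (Quot.out e).2 with hb
    have heq : s(a, b) = e := Quot.out_eq e
    have hab : B.Adj a b := by rw [← SimpleGraph.mem_edgeSet, heq]; exact he
    have hcc : root a = root b := by
      simp only [hroot]
      rw [SimpleGraph.ConnectedComponent.sound hab.reachable]
    have hne' := aux_dist_ne hB (hroot_reach a) hab
    rcases lt_or_gt_of_ne hne' with hlt | hgt
    · exact ⟨b, a, heq.symm, by rwa [← hcc]⟩
    · exact ⟨a, b, by rw [← heq, Sym2.eq_swap], hgt⟩
  set f : Sym2 W → W := fun e => if h : ∃ v, P e v then h.choose else Classical.arbitrary W with hf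
  have hfP : ∀ e ∈ B.edgeSet, P e (f e) := by
    intro e he
    have h := hex e he
    simp only [hf, dif_pos h]
    exact h.choose_spec
  apply Set.ncard_le_ncard_of_injOn f _ _ (Set.toFinite _)
  · intro e he
    obtain ⟨o, heo, _⟩ := hfP e he
    refine ⟨o, ?_⟩
    have : B.Adj o (f e) := by rw [← SimpleGraph.mem_edgeSet, ← heo]; exact he
    exact this.symm
  · intro e he e' he' hfe
    obtain ⟨o, heo, hdo⟩ := hfP e he
    obtain ⟨o', heo', hdo'⟩ := hfP e' he'
    set v := f e with hv
    rw [← hfe] at heo' hdo'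
    by_cases hoo : o = o'
    · rw [heo, heo', hoo]
    · exfalso
      have hov : B.Adj o v := by rw [← SimpleGraph.mem_edgeSet, ← heo]; exact he
      have ho'v : B.Adj o' v := by rw [← SimpleGraph.mem_edgeSet, ← heo']; exact he'
      have hro : B.Reachable (root v) o := (hroot_reach v).trans hov.symm.reachable
      have hro' : B.Reachable (root v) o' := (hroot_reach v).trans ho'v.symm.reachable
      exact aux_two_down hB hro hro' hov ho'v hoo hdo hdo'



section MainAux
variable {V : Type} [Fintype V] [DecidableEq V] (G : SimpleGraph V)
    (S : Set (Sym2 V)) (Z : Set V)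

theorem stmt18_aux (hS : S ⊆ G.edgeSet)
    (hZdisj : ∀ z ∈ Z, ¬ ∃ e ∈ S, z ∈ e)
    (hZ : ∀ (v : V) (c : G.Walk v v), c.IsCycle → (∃ e ∈ c.edges, e ∈ S) →
      ∃ z ∈ Z, z ∈ c.support) :
    S.ncard ≤
      {C : ((G.deleteEdges S).induce {v : V | v ∉ Z}).ConnectedComponent |
        ∃ u : {v : V // v ∉ Z},
          ((G.deleteEdges S).induce {v : V | v ∉ Z}).connectedComponentMk u = C ∧
          ∃ e ∈ S, u.1 ∈ e}.ncard := by
  classical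
  set H := (G.deleteEdges S).induce {v : V | v ∉ Z} with hH
  set cc := H.connectedComponentMk with hccdef
  rcases Set.eq_empty_or_nonempty S with hSe | ⟨e₀, he₀⟩
  · simp [hSe]
  have hnotZ : ∀ ⦃e⦄, e ∈ S → ∀ ⦃x⦄, x ∈ e → x ∈ {v : V | v ∉ Z} :=
    fun e he x hx hxZ => hZdisj x hxZ ⟨e, he, hx⟩
  have hne : Nonempty {v : V | v ∉ Z} := ⟨⟨(Quot.out e₀).1, hnotZ he₀ (Sym2.out_fst_mem e₀)⟩⟩
  -- adjacency characterization of induced delete-edges graphs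
  have hadjI : ∀ (T : Set (Sym2 V)) (a b : {v : V | v ∉ Z}),
      ((G.deleteEdges T).induce {v : V | v ∉ Z}).Adj a b ↔
        (G.Adj a.1 b.1 ∧ s(a.1, b.1) ∉ T) := by
    intro T a b
    simp [SimpleGraph.induce, SimpleGraph.comap_adj, Function.Embedding.coe_subtype,
      SimpleGraph.deleteEdges_adj]
  -- the key contradiction machine
  have key : ∀ f ∈ S, ∀ x y : {v : V | v ∉ Z}, s(x.1, y.1) = f →
      ¬ ((G.deleteEdges {f}).induce {v : V | v ∉ Z}).Reachable x y := by
    intro f hf x y hxy hreach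
    obtain ⟨w0⟩ := hreach
    set p := w0.toPath with hp
    let φ : (G.deleteEdges {f}).induce {v : V | v ∉ Z} →g G :=
      ⟨Subtype.val, fun {a b} hab => ((hadjI {f} a b).mp hab).1⟩
    set w' := (p : ((G.deleteEdges {f}).induce {v : V | v ∉ Z}).Walk x y).map φ with hw'
    have hw'path : w'.IsPath := Walk.map_isPath_of_injective Subtype.val_injective p.2
    have hGadj : G.Adj x.1 y.1 := by
      rw [← SimpleGraph.mem_edgeSet, hxy]; exact hS hf
    have hfnotin : s(y.1, x.1) ∉ w'.edges := by
      rw [hw', SimpleGraph.Walk.edges_map]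
      intro hmem'
      obtain ⟨q, hq, hq2⟩ := List.mem_map.mp hmem'
      have hqE := Walk.edges_subset_edgeSet _ hq
      induction q with
      | h a b =>
        have hadj' := (hadjI {f} a b).mp ((SimpleGraph.mem_edgeSet _).mp hqE)
        apply hadj'.2
        have : Sym2.map (⇑φ) s(a, b) = s(a.1, b.1) := Sym2.map_pair_eq _ _ _
        rw [this] at hq2
        rw [hq2, Sym2.eq_swap, hxy]
        exact rfl
    set cyc := Walk.cons hGadj.symm w' with hcyc
    have hcycC : cyc.IsCycle := (Walk.cons_isCycle_iff _ _).mpr ⟨hw'path, hfnotin⟩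
    have hcycS : ∃ e ∈ cyc.edges, e ∈ S := by
      refine ⟨s(y.1, x.1), ?_, ?_⟩
      · rw [hcyc, SimpleGraph.Walk.edges_cons]; exact List.mem_cons_self
      · rw [Sym2.eq_swap, hxy]; exact hf
    obtain ⟨z, hzZ, hzsup⟩ := hZ y.1 cyc hcycC hcycS
    rw [hcyc, SimpleGraph.Walk.support_cons] at hzsup
    rcases List.mem_cons.mp hzsup with h | h
    · exact y.2 (h ▸ hzZ)
    · rw [hw', SimpleGraph.Walk.support_map] at h
      obtain ⟨u, _, hu2⟩ := List.mem_map.mp h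
      apply u.2
      show u.1 ∈ Z
      have : φ u = u.1 := rfl
      rw [← this, hu2]
      exact hzZ
  -- H is a subgraph of each (G.deleteEdges {f}).induce
  have hHle : ∀ f ∈ S, H ≤ (G.deleteEdges {f}).induce {v : V | v ∉ Z} := by
    intro f hf a b hab
    rw [hH, hadjI] at hab
    rw [hadjI]
    refine ⟨hab.1, ?_⟩
    simp only [Set.mem_singleton_iff]
    intro h
    exact hab.2 (h ▸ hf)
  have hKadjS : ∀ f ∈ S, ∀ g ∈ S, g ≠ f → ∀ a b : {v : V | v ∉ Z}, s(a.1, b.1) = g →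
      ((G.deleteEdges {f}).induce {v : V | v ∉ Z}).Adj a b := by
    intro f hf g hg hgf a b hab
    rw [hadjI]
    refine ⟨by rw [← SimpleGraph.mem_edgeSet, hab]; exact hS hg, ?_⟩
    simp only [Set.mem_singleton_iff]
    rw [hab]
    exact hgf
  have hccR : ∀ x y : {v : V | v ∉ Z}, cc x = cc y → H.Reachable x y :=
    fun x y h => SimpleGraph.ConnectedComponent.exact h
  -- cc' and F
  set cc' : V → H.ConnectedComponent :=
    fun v => if h : v ∈ {v : V | v ∉ Z} then cc ⟨v, h⟩ else cc (Classical.arbitrary _) with hcc'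
  set F : Sym2 V → Sym2 H.ConnectedComponent := Sym2.map cc' with hF
  -- representation of S-edges
  have hrep : ∀ g ∈ S, ∃ x y : {v : V | v ∉ Z}, s(x.1, y.1) = g ∧ F g = s(cc x, cc y) := by
    intro g hg
    set a := (Quot.out g).1 with ha
    set b := (Quot.out g).2 with hb
    have heq : s(a, b) = g := Quot.out_eq g
    have haZ : a ∈ {v : V | v ∉ Z} := hnotZ hg (Sym2.out_fst_mem g)
    have hbZ : b ∈ {v : V | v ∉ Z} := hnotZ hg (Sym2.out_snd_mem g)
    refine ⟨⟨a, haZ⟩, ⟨b, hbZ⟩, heq, ?_⟩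
    rw [hF, ← heq, Sym2.map_pair_eq, hcc']
    simp only [dif_pos haZ, dif_pos hbZ]
  -- F g is never diagonal
  have hFnd : ∀ g ∈ S, ¬ (F g).IsDiag := by
    intro g hg hd
    obtain ⟨x, y, hxy, hFg⟩ := hrep g hg
    rw [hFg] at hd
    have hcceq : cc x = cc y := Sym2.mk_isDiag_iff.mp hd
    exact key g hg x y hxy ((hccR x y hcceq).mono (hHle g hg))
  -- F is injective on S
  have hFinj : Set.InjOn F S := by
    intro g hg g' hg' hFF
    by_contra hne'
    obtain ⟨x, y, hxy, hFg⟩ := hrep g hg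
    obtain ⟨x', y', hxy', hFg'⟩ := hrep g' hg'
    rw [hFg, hFg'] at hFF
    have hadjK : ∀ a b : {v : V | v ∉ Z}, s(a.1, b.1) = g' →
        ((G.deleteEdges {g}).induce {v : V | v ∉ Z}).Adj a b :=
      fun a b hab => hKadjS g hg g' hg' (fun h => hne' (h ▸ rfl)) a b hab
    rcases Sym2.eq_iff.mp hFF with ⟨h1, h2⟩ | ⟨h1, h2⟩
    · have r1 := ((hccR x x' h1).mono (hHle g hg))
      have r2 := (hadjK x' y' hxy').reachable
      have r3 := ((hccR y' y h2.symm).mono (hHle g hg))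
      exact key g hg x y hxy ((r1.trans r2).trans r3)
    · have r1 := ((hccR x y' h1).mono (hHle g hg))
      have r2 := (hadjK y' x' (by rw [Sym2.eq_swap]; exact hxy')).symm.reachable
      have r3 := ((hccR x' y h2.symm).mono (hHle g hg))
      exact key g hg x y hxy ((r1.trans r2.symm).trans r3)
  -- the bubble graph
  set B : SimpleGraph H.ConnectedComponent := SimpleGraph.fromEdgeSet (F '' S) with hB
  have hBac : B.IsAcyclic := by
    rw [SimpleGraph.isAcyclic_iff_forall_edge_isBridge]
    intro q hq
    induction q with
    | h c d =>
    rw [SimpleGraph.isBridge_iff]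
    have hadj : B.Adj c d := (SimpleGraph.mem_edgeSet _).mp hq
    intro hreach
    obtain ⟨hcd, hne2⟩ := (SimpleGraph.fromEdgeSet_adj _).mp hadj
    obtain ⟨f, hfS, hFf⟩ := hcd
    -- lifting walks in B minus the edge F f to reachability avoiding f
    have lift : ∀ {c' d' : H.ConnectedComponent} (w : (B \ fromEdgeSet {F f}).Walk c' d')
        (x y : {v : V | v ∉ Z}), cc x = c' → cc y = d' →
        ((G.deleteEdges {f}).induce {v : V | v ∉ Z}).Reachable x y := by
      intro c' d' w
      induction w with
      | nil =>
        intro x y hx hy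
        exact ((hccR x y (hx.trans hy.symm)).mono (hHle f hfS))
      | @cons c' m d' h w' ih =>
        intro x y hx hy
        rw [SimpleGraph.sdiff_adj] at h
        obtain ⟨hBadj, hnadj⟩ := h
        obtain ⟨hmem', hnecm⟩ := (SimpleGraph.fromEdgeSet_adj _).mp hBadj
        obtain ⟨g, hgS, hFg⟩ := hmem'
        have hgf : g ≠ f := by
          intro h
          apply hnadj
          rw [SimpleGraph.fromEdgeSet_adj]
          exact ⟨by rw [← h, hFg]; exact rfl, hnecm⟩
        obtain ⟨xg, yg, hxyg, hFg2⟩ := hrep g hgS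
        rw [hFg] at hFg2
        rcases Sym2.eq_iff.mp hFg2.symm with ⟨h1, h2⟩ | ⟨h1, h2⟩
        · have r1 := ((hccR x xg (hx.trans h1.symm)).mono (hHle f hfS))
          have r2 := (hKadjS f hfS g hgS hgf xg yg hxyg).reachable
          have r3 := ih yg y h2 hy
          exact (r1.trans r2).trans r3
        · have r1 := ((hccR x yg (hx.trans h2.symm)).mono (hHle f hfS))
          have r2 := (hKadjS f hfS g hgS hgf xg yg hxyg).symm.reachable
          have r3 := ih xg y h1 hy
          exact (r1.trans r2).trans r3
    obtain ⟨xf, yf, hxyf, hFf2⟩ := hrep f hfS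
    rw [hFf] at hFf2
    rw [← hFf] at hreach
    rcases Sym2.eq_iff.mp hFf2.symm with ⟨h1, h2⟩ | ⟨h1, h2⟩
    · obtain ⟨wB⟩ := hreach
      exact key f hfS xf yf hxyf (lift wB xf yf h1 h2)
    · obtain ⟨wB⟩ := hreach.symm
      exact key f hfS xf yf hxyf (lift wB xf yf h1 h2)
  -- counting
  have hsub1 : F '' S ⊆ B.edgeSet := by
    rw [hB, SimpleGraph.edgeSet_fromEdgeSet]
    rintro q ⟨g, hg, rfl⟩
    exact ⟨⟨g, hg, rfl⟩, hFnd g hg⟩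
  have hsub2 : {c : H.ConnectedComponent | ∃ d, B.Adj c d} ⊆
      {C : H.ConnectedComponent | ∃ u : {v : V // v ∉ Z}, cc u = C ∧ ∃ e ∈ S, u.1 ∈ e} := by
    rintro c ⟨d, hadj⟩
    obtain ⟨⟨g, hg, hFg⟩, hne2⟩ := (SimpleGraph.fromEdgeSet_adj _).mp hadj
    obtain ⟨x, y, hxy, hFg2⟩ := hrep g hg
    rw [hFg] at hFg2
    have hxm : x.1 ∈ g := by rw [← hxy]; exact Sym2.mem_mk_left _ _
    have hym : y.1 ∈ g := by rw [← hxy]; exact Sym2.mem_mk_right _ _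
    rcases Sym2.eq_iff.mp hFg2.symm with ⟨h1, _⟩ | ⟨_, h2⟩
    · exact ⟨x, h1, g, hg, hxm⟩
    · exact ⟨y, h2, g, hg, hym⟩
  calc S.ncard = (F '' S).ncard := (Set.ncard_image_of_injOn hFinj).symm
    _ ≤ B.edgeSet.ncard := Set.ncard_le_ncard hsub1 (Set.toFinite _)
    _ ≤ {c : H.ConnectedComponent | ∃ d, B.Adj c d}.ncard := acyclic_card_bound B hBac
    _ ≤ _ := Set.ncard_le_ncard hsub2 (Set.toFinite _)

end MainAux

/-- If `Z` is disjoint from `V(S)` and `G - Z` has no `S`-cycle, then `|S|` is at most the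
number of connected components of `G - Z - S` containing an endpoint of an `S`-edge
(the non-solitary bubbles). -/
theorem stmt18 {V : Type} [Fintype V] [DecidableEq V] (G : SimpleGraph V)
    (S : Set (Sym2 V)) (hS : S ⊆ G.edgeSet) (Z : Set V)
    (hZdisj : ∀ z ∈ Z, ¬ ∃ e ∈ S, z ∈ e)
    (hZ : ∀ (v : V) (c : G.Walk v v), c.IsCycle → (∃ e ∈ c.edges, e ∈ S) →
      ∃ z ∈ Z, z ∈ c.support) :
    letI H := (G.deleteEdges S).induce {v : V | v ∉ Z}
    letI cc := H.connectedComponentMk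
    S.ncard ≤
      {C : H.ConnectedComponent | ∃ u : {v : V // v ∉ Z}, cc u = C ∧ ∃ e ∈ S, u.1 ∈ e}.ncard := by
  exact stmt18_aux G S Z hS hZdisj hZ
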